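/- arXiv:1410.7075 — 3 statements merged into one kernel-verified Lean document; each statement's English description precedes it below -/
import Mathlib

section
/- Let 0 < p < 1. There exists a constant c_p > 0, depending only on p and λ = sup_k m_k, such that for every martingale f = (f^{(n)})_{n≥0} in the martingale Hardy space H_p(G_m) and every integer n ≥ 1, the Vilenkin–Fourier coefficient satisfies |f̂(n)| ≤ c_p · n^{1/p−1} · ‖f‖_{H_p}. -/
open MeasureTheory Filter ENNReal Finset

noncomputable section

/-- The Vilenkin group `G_m`: complete direct product of cyclic groups `ℤ_{m_k}`. -/
abbrev Gm (m : ℕ → ℕ) : Type := ∀ k : ℕ, ZMod (m k)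

/-- The generalized powers `M_0 = 1`, `M_{k+1} = m_k M_k`. -/
def Mgen (m : ℕ → ℕ) : ℕ → ℕ
  | 0 => 1
  | k + 1 => m k * Mgen m k

/-- The digits of `n` in the generalized number system `n = Σ_j n_j M_j`. -/
def digit (m : ℕ → ℕ) (n j : ℕ) : ℕ := (n / Mgen m j) % m j

/-- The generalized Rademacher functions `r_k(x) = exp(2πi x_k / m_k)`. -/
def rade (m : ℕ → ℕ) (k : ℕ) (x : Gm m) : ℂ :=
  Complex.exp (2 * Real.pi * Complex.I * ((x k).val : ℂ) / (m k : ℂ))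

/-- The Vilenkin system `ψ_n = Π_k r_k^{n_k}` (all digits `n_k` with `k > n` vanish). -/
def psi (m : ℕ → ℕ) (n : ℕ) (x : Gm m) : ℂ :=
  ∏ k ∈ Finset.range (n + 1), rade m k x ^ digit m n k

/-- The cylinder `I_n(x) = {y : y_0 = x_0, ..., y_{n-1} = x_{n-1}}`. -/
def cyl (m : ℕ → ℕ) (n : ℕ) (x : Gm m) : Set (Gm m) := {y | ∀ j < n, y j = x j}

/-- Vilenkin–Fourier coefficient of an integrable function. -/
def fcoef (m : ℕ → ℕ) (μ : Measure (Gm m)) (f : Gm m → ℂ) (k : ℕ) : ℂ :=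
  ∫ x, f x * (starRingEnd ℂ) (psi m k x) ∂μ

/-- Partial sums of the Vilenkin–Fourier series of a function. -/
def Spart (m : ℕ → ℕ) (μ : Measure (Gm m)) (f : Gm m → ℂ) (n : ℕ) (x : Gm m) : ℂ :=
  ∑ k ∈ Finset.range n, fcoef m μ f k * psi m k x

/-- The Dirichlet kernels `D_n = Σ_{k<n} ψ_k`. -/
def Dker (m : ℕ → ℕ) (n : ℕ) (x : Gm m) : ℂ :=
  ∑ k ∈ Finset.range n, psi m k x

/-- `f = (f^{(n)})` is a martingale w.r.t. the filtration generated by the cylinders: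
each `f^{(n)}` is integrable and, for `n ≤ k`, the conditional expectation of `f^{(k)}`
on the `n`-th σ-algebra (the average on each cylinder `I_n(x)`) equals `f^{(n)}`. -/
def IsVMartingale (m : ℕ → ℕ) (μ : Measure (Gm m)) (f : ℕ → Gm m → ℂ) : Prop :=
  (∀ n, Integrable (f n) μ) ∧
  ∀ n k : ℕ, n ≤ k → ∀ x : Gm m, f n x = (Mgen m n : ℂ) * ∫ t in cyl m n x, f k t ∂μ

/-- Vilenkin–Fourier coefficient of a martingale: `lim_k ∫ f^{(k)} ψ̄_i dμ`; since the
integral is independent of `k` once `M_k > i`, and `M_{i+1} > i`, we take `k = i+1`. -/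
def mfhat (m : ℕ → ℕ) (μ : Measure (Gm m)) (f : ℕ → Gm m → ℂ) (i : ℕ) : ℂ :=
  ∫ x, f (i + 1) x * (starRingEnd ℂ) (psi m i x) ∂μ

/-- The `H_p` (quasi-)norm of a martingale: `‖sup_n |f^{(n)}|‖_{L^p(μ)}`, as an `ℝ≥0∞`. -/
def HpNorm (m : ℕ → ℕ) (μ : Measure (Gm m)) (p : ℝ) (f : ℕ → Gm m → ℂ) : ℝ≥0∞ :=
  (∫⁻ x, (⨆ n, (‖f n x‖₊ : ℝ≥0∞)) ^ p ∂μ) ^ (1 / p)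

section Aux
variable {m : ℕ → ℕ}

lemma Mgen_pos (hm2 : ∀ k, 2 ≤ m k) (k : ℕ) : 0 < Mgen m k := by
  induction k with
  | zero => simp [Mgen]
  | succ k ih =>
    have := hm2 k
    have : Mgen m (k+1) = m k * Mgen m k := rfl
    have := Nat.mul_pos (by omega : 0 < m k) ih
    omega

lemma Mgen_mono (hm2 : ∀ k, 2 ≤ m k) : Monotone (Mgen m) := by
  refine monotone_nat_of_le_succ fun k => ?_
  have h := hm2 k
  have : Mgen m (k+1) = m k * Mgen m k := rfl
  have h2 : 1 * Mgen m k ≤ m k * Mgen m k := Nat.mul_le_mul_right _ (by omega)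
  omega

lemma lt_Mgen (hm2 : ∀ k, 2 ≤ m k) (k : ℕ) : k < Mgen m k := by
  induction k with
  | zero => simp [Mgen]
  | succ k ih =>
    have h1 := hm2 k
    have h2 : 2 * Mgen m k ≤ m k * Mgen m k := Nat.mul_le_mul_right _ h1
    have h3 : Mgen m (k+1) = m k * Mgen m k := rfl
    omega

lemma digit_eq_zero {n j : ℕ} (h : n < Mgen m j) : digit m n j = 0 := by
  unfold digit; rw [Nat.div_eq_of_lt h, Nat.zero_mod]

lemma measurableSet_cyl (N : ℕ) (x : Gm m) : MeasurableSet (cyl m N x) := by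
  have h : cyl m N x = ⋂ j ∈ Set.Iio N, (fun y : Gm m => y j) ⁻¹' {x j} := by
    ext y; simp [cyl]
  rw [h]
  exact MeasurableSet.biInter (Set.to_countable _) fun j _ =>
    measurable_pi_apply j (measurableSet_singleton _)

lemma psi_eqOn (hm2 : ∀ k, 2 ≤ m k) {n K : ℕ} (h : n < Mgen m K) {x y : Gm m}
    (hy : y ∈ cyl m K x) : psi m n y = psi m n x := by
  unfold psi
  refine Finset.prod_congr rfl fun j _ => ?_
  by_cases hj : j < K
  · unfold rade; rw [hy j hj]
  · rw [digit_eq_zero (lt_of_lt_of_le h (Mgen_mono hm2 (not_lt.1 hj))), pow_zero, pow_zero]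

lemma norm_rade (k : ℕ) (x : Gm m) : ‖rade m k x‖ = 1 := by
  unfold rade
  have h : 2 * Real.pi * Complex.I * (((x k).val : ℕ) : ℂ) / ((m k : ℕ) : ℂ)
      = ((2 * Real.pi * ((x k).val : ℝ) / (m k : ℝ) : ℝ) : ℂ) * Complex.I := by
    push_cast; ring
  rw [h, Complex.norm_exp_ofReal_mul_I]

lemma norm_psi (n : ℕ) (x : Gm m) : ‖psi m n x‖ = 1 := by
  unfold psi
  rw [norm_prod]
  exact Finset.prod_eq_one fun j _ => by rw [norm_pow, norm_rade, one_pow]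

lemma cyl_eq {N : ℕ} {x y : Gm m} (hy : y ∈ cyl m N x) : cyl m N y = cyl m N x := by
  ext z
  exact ⟨fun h j hj => (h j hj).trans (hy j hj), fun h j hj => (h j hj).trans (hy j hj).symm⟩

lemma martingale_const {μ : Measure (Gm m)} {f : ℕ → Gm m → ℂ} (hf : IsVMartingale m μ f)
    {N : ℕ} {x y : Gm m} (hy : y ∈ cyl m N x) : f N y = f N x := by
  rw [hf.2 N N le_rfl y, hf.2 N N le_rfl x, cyl_eq hy]

lemma measurable_psi (n : ℕ) : Measurable (psi m n) := by
  unfold psi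
  refine Finset.measurable_prod _ fun j _ => ?_
  refine Measurable.pow_const ?_ _
  unfold rade
  have h1 : Measurable fun x : Gm m => x j := measurable_pi_apply j
  have h2 : Measurable fun z : ZMod (m j) =>
      Complex.exp (2 * Real.pi * Complex.I * (z.val : ℂ) / (m j : ℂ)) := by measurability
  exact h2.comp h1

lemma step1 (hm2 : ∀ k, 2 ≤ m k) {μ : Measure (Gm m)}
    {f : ℕ → Gm m → ℂ} (hf : IsVMartingale m μ f) {n K : ℕ}
    (hK : n < Mgen m K) (hKn : K ≤ n + 1) :
    (∫ x, f (n+1) x * (starRingEnd ℂ) (psi m n x) ∂μ)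
      = ∫ x, f K x * (starRingEnd ℂ) (psi m n x) ∂μ := by
  classical
  haveI : ∀ j, NeZero (m j) := fun j => ⟨by have := hm2 j; omega⟩
  set e : (∀ j : Fin K, ZMod (m j)) → Gm m :=
    fun a j => if h : j < K then a ⟨j, h⟩ else 0 with he
  have hmem : ∀ y : Gm m, y ∈ cyl m K (e fun j => y j) := by
    intro y
    simp only [cyl, Set.mem_setOf_eq]
    intro j hj
    simp only [e, dif_pos hj]
  have hM : (Mgen m K : ℂ) ≠ 0 := Nat.cast_ne_zero.2 (Mgen_pos hm2 K).ne'
  have key : ∀ N, K ≤ N →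
      ∫ x, f N x * (starRingEnd ℂ) (psi m n x) ∂μ
        = ∑ a, (starRingEnd ℂ) (psi m n (e a)) * ((Mgen m K : ℂ)⁻¹ * f K (e a)) := by
    intro N hKN
    have hsm : Measurable fun x : Gm m => (starRingEnd ℂ) (psi m n x) :=
      (continuous_star.measurable).comp (measurable_psi n)
    have hint2 : Integrable (fun x => f N x * (starRingEnd ℂ) (psi m n x)) μ := by
      have hb : Integrable (fun x => (starRingEnd ℂ) (psi m n x) * f N x) μ :=
        (hf.1 N).bdd_mul hsm.aestronglyMeasurable
          (c := 1) (Filter.Eventually.of_forall fun x => by rw [RCLike.norm_conj, norm_psi])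
      exact hb.congr (Filter.Eventually.of_forall fun x => mul_comm _ _)
    have hcover : ⋃ a, cyl m K (e a) = Set.univ := by
      ext y
      simp only [Set.mem_iUnion, Set.mem_univ, iff_true]
      exact ⟨fun j => y j, hmem y⟩
    have hdisj : Pairwise (Function.onFun Disjoint fun a => cyl m K (e a)) := by
      intro a b hab
      refine Set.disjoint_left.2 fun y hya hyb => hab ?_
      funext j
      have h1 := hya j j.2
      have h2 := hyb j j.2
      simp only [e, dif_pos j.2] at h1 h2
      exact h1.symm.trans h2
    calc ∫ x, f N x * (starRingEnd ℂ) (psi m n x) ∂μ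
        = ∫ x in ⋃ a, cyl m K (e a), f N x * (starRingEnd ℂ) (psi m n x) ∂μ := by
          rw [hcover, Measure.restrict_univ]
      _ = ∑' a, ∫ x in cyl m K (e a), f N x * (starRingEnd ℂ) (psi m n x) ∂μ :=
          integral_iUnion (fun a => measurableSet_cyl K _) hdisj
            (hcover ▸ hint2.integrableOn)
      _ = ∑ a, ∫ x in cyl m K (e a), f N x * (starRingEnd ℂ) (psi m n x) ∂μ := tsum_fintype _
      _ = ∑ a, (starRingEnd ℂ) (psi m n (e a)) * ((Mgen m K : ℂ)⁻¹ * f K (e a)) := by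
          refine Finset.sum_congr rfl fun a _ => ?_
          have hc1 : ∫ x in cyl m K (e a), f N x * (starRingEnd ℂ) (psi m n x) ∂μ
              = ∫ x in cyl m K (e a), (starRingEnd ℂ) (psi m n (e a)) * f N x ∂μ :=
            setIntegral_congr_fun (measurableSet_cyl _ _) fun y hy => by
              rw [psi_eqOn hm2 hK hy, mul_comm]
          rw [hc1, integral_const_mul]
          congr 1
          have h2 := hf.2 K N hKN (e a)
          rw [h2, ← mul_assoc, inv_mul_cancel₀ hM, one_mul]
  rw [key (n+1) hKn, key K le_rfl]

end Aux

/-- For `0 < p < 1` there is a constant `c_p > 0`, depending only on `p` and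
`λ = sup_k m_k`, such that every martingale `f ∈ H_p(G_m)` satisfies
`|f̂(n)| ≤ c_p n^{1/p-1} ‖f‖_{H_p}` for all `n ≥ 1`. -/
theorem vilenkin_fourier_coefficient_bound_martingale
    (p : ℝ) (hp0 : 0 < p) (hp1 : p < 1) (lam : ℕ) :
    ∃ c : ℝ, 0 < c ∧
      ∀ (m : ℕ → ℕ), (∀ k, 2 ≤ m k) → (∀ k, m k ≤ lam) →
      ∀ (μ : Measure (Gm m)), (∀ n x, μ (cyl m n x) = ((Mgen m n : ℝ≥0∞))⁻¹) →
      ∀ f : ℕ → Gm m → ℂ, IsVMartingale m μ f → HpNorm m μ p f < ⊤ →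
      ∀ n : ℕ, 1 ≤ n →
        ENNReal.ofReal ‖mfhat m μ f n‖ ≤
          ENNReal.ofReal (c * (n : ℝ) ^ (1 / p - 1)) * HpNorm m μ p f := by

  classical
  have hq0 : (0:ℝ) ≤ 1/p - 1 := by
    rw [sub_nonneg]
    rw [le_div_iff₀ hp0, one_mul]
    exact hp1.le
  have hq : (1:ℝ)/p - 1 = (1-p)/p := by field_simp
  have hq0' : (0:ℝ) ≤ (1-p)/p := hq ▸ hq0
  refine ⟨((lam + 2 : ℕ) : ℝ) ^ ((1:ℝ)/p - 1), by positivity, ?_⟩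
  intro m hm2 hmlam μ hμ f hf hfin n hn
  -- choose K with Mgen m (K-1) ≤ n < Mgen m K and Mgen m K ≤ (lam+2) * n
  set P : ℕ → Prop := fun j => Mgen m j ≤ n with hPdef
  have hP0 : P 0 := by simpa [P, Mgen] using hn
  set k := Nat.findGreatest P n with hkdef
  have hk_le : Mgen m k ≤ n := Nat.findGreatest_spec (Nat.zero_le n) hP0
  have hk_lt : n < Mgen m (k + 1) := by
    by_contra h
    push_neg at h
    have h1 : k + 1 ≤ n := le_trans (lt_Mgen hm2 (k+1)).le h
    exact Nat.findGreatest_is_greatest (Nat.lt_succ_self k) h1 h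
  have hKn : k + 1 ≤ n + 1 := Nat.succ_le_succ (Nat.findGreatest_le n)
  set K := k + 1 with hKdef
  have hMK_le : Mgen m K ≤ (lam + 2) * n := by
    have h1 : Mgen m K = m k * Mgen m k := rfl
    have h2 : m k * Mgen m k ≤ (lam + 2) * n :=
      Nat.mul_le_mul (le_trans (hmlam k) (by omega)) hk_le
    omega
  -- basic ENNReal facts
  set L := ∫⁻ x, (⨆ j, (‖f j x‖₊ : ℝ≥0∞)) ^ p ∂μ with hLdef
  have hHp : HpNorm m μ p f = L ^ ((1:ℝ)/p) := rfl
  have hMt : (Mgen m K : ℝ≥0∞) ≠ ⊤ := ENNReal.natCast_ne_top _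
  have hM0 : (Mgen m K : ℝ≥0∞) ≠ 0 := Nat.cast_ne_zero.2 (Mgen_pos hm2 K).ne'
  have hLne : L ≠ ⊤ := by
    have h1 : L = (HpNorm m μ p f) ^ p := by
      rw [hHp, ← ENNReal.rpow_mul, one_div, inv_mul_cancel₀ hp0.ne', ENNReal.rpow_one]
    rw [h1]
    exact (ENNReal.rpow_lt_top_of_nonneg hp0.le hfin.ne).ne
  have hLK : ∫⁻ x, (‖f K x‖₊ : ℝ≥0∞) ^ p ∂μ ≤ L :=
    lintegral_mono fun x =>
      ENNReal.rpow_le_rpow (le_iSup (fun j => (‖f j x‖₊ : ℝ≥0∞)) K) hp0.le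
  -- pointwise bound
  have hpt : ∀ x, (‖f K x‖₊ : ℝ≥0∞) ^ p ≤ (Mgen m K : ℝ≥0∞) * L := by
    intro x
    have h1 : ∫⁻ y in cyl m K x, (‖f K y‖₊ : ℝ≥0∞) ^ p ∂μ
        = (‖f K x‖₊ : ℝ≥0∞) ^ p * μ (cyl m K x) := by
      rw [setLIntegral_congr_fun (measurableSet_cyl K x)
        (fun y (hy : y ∈ cyl m K x) => by rw [martingale_const hf hy]),
        setLIntegral_const]
    have h2 : ∫⁻ y in cyl m K x, (‖f K y‖₊ : ℝ≥0∞) ^ p ∂μ ≤ L :=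
      le_trans (lintegral_mono' Measure.restrict_le_self le_rfl) hLK
    rw [h1, hμ K x] at h2
    calc (‖f K x‖₊ : ℝ≥0∞) ^ p
        = (Mgen m K : ℝ≥0∞) * ((‖f K x‖₊ : ℝ≥0∞) ^ p * ((Mgen m K : ℝ≥0∞))⁻¹) := by
          rw [mul_comm, mul_assoc, ENNReal.inv_mul_cancel hM0 hMt, mul_one]
      _ ≤ (Mgen m K : ℝ≥0∞) * L := mul_le_mul_right h2 _
  -- main chain
  have hCne : ((Mgen m K : ℝ≥0∞) * L) ^ ((1-p)/p) ≠ ⊤ :=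
    (ENNReal.rpow_lt_top_of_nonneg hq0' (ENNReal.mul_ne_top hMt hLne)).ne
  have key : ENNReal.ofReal ‖mfhat m μ f n‖ ≤
      (Mgen m K : ℝ≥0∞) ^ ((1-p)/p) * L ^ ((1:ℝ)/p) := by
    have e1 : mfhat m μ f n = ∫ x, f K x * (starRingEnd ℂ) (psi m n x) ∂μ :=
      step1 hm2 hf hk_lt hKn
    calc ENNReal.ofReal ‖mfhat m μ f n‖
        = (‖∫ x, f K x * (starRingEnd ℂ) (psi m n x) ∂μ‖₊ : ℝ≥0∞) := by
          rw [e1, ofReal_norm_eq_enorm]; rfl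
      _ ≤ ∫⁻ x, (‖f K x * (starRingEnd ℂ) (psi m n x)‖₊ : ℝ≥0∞) ∂μ :=
          enorm_integral_le_lintegral_enorm _
      _ = ∫⁻ x, (‖f K x‖₊ : ℝ≥0∞) ∂μ := by
          refine lintegral_congr fun x => ?_
          have h3 : ‖(starRingEnd ℂ) (psi m n x)‖₊ = 1 := by
            rw [← norm_toNNReal, RCLike.norm_conj, norm_psi, Real.toNNReal_one]
          rw [nnnorm_mul, h3, mul_one]
      _ ≤ ∫⁻ x, ((Mgen m K : ℝ≥0∞) * L) ^ ((1-p)/p) * ((‖f K x‖₊ : ℝ≥0∞)) ^ p ∂μ := by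
          refine lintegral_mono fun x => ?_
          set a := (‖f K x‖₊ : ℝ≥0∞) with hadef
          rcases eq_or_ne a 0 with h0 | h0
          · rw [h0, ENNReal.zero_rpow_of_pos hp0, mul_zero]
          · have ha : a ≠ ⊤ := coe_ne_top
            have e2 : a = a ^ ((1:ℝ)-p) * a ^ p := by
              rw [← ENNReal.rpow_add _ _ h0 ha, sub_add_cancel, ENNReal.rpow_one]
            have e3 : a ^ ((1:ℝ)-p) = (a ^ p) ^ ((1-p)/p) := by
              rw [← ENNReal.rpow_mul]
              congr 1
              field_simp
            calc a = a ^ ((1:ℝ)-p) * a ^ p := e2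
              _ ≤ ((Mgen m K : ℝ≥0∞) * L) ^ ((1-p)/p) * a ^ p := by
                  refine mul_le_mul_left ?_ _
                  rw [e3]
                  exact ENNReal.rpow_le_rpow (hpt x) hq0'
      _ = ((Mgen m K : ℝ≥0∞) * L) ^ ((1-p)/p) * ∫⁻ x, ((‖f K x‖₊ : ℝ≥0∞)) ^ p ∂μ :=
          lintegral_const_mul' _ _ hCne
      _ ≤ ((Mgen m K : ℝ≥0∞) * L) ^ ((1-p)/p) * L := mul_le_mul_right hLK _
      _ = (Mgen m K : ℝ≥0∞) ^ ((1-p)/p) * (L ^ ((1-p)/p) * L) := by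
          rw [ENNReal.mul_rpow_of_nonneg _ _ hq0', mul_assoc]
      _ = (Mgen m K : ℝ≥0∞) ^ ((1-p)/p) * L ^ ((1:ℝ)/p) := by
          congr 1
          rcases eq_or_ne L 0 with h0 | h0
          · rw [h0, ENNReal.zero_rpow_of_pos (by positivity : (0:ℝ) < 1/p), mul_zero]
          · calc L ^ ((1-p)/p) * L = L ^ ((1-p)/p) * L ^ (1:ℝ) := by rw [ENNReal.rpow_one]
              _ = L ^ ((1-p)/p + 1) := (ENNReal.rpow_add _ _ h0 hLne).symm
              _ = L ^ ((1:ℝ)/p) := by congr 1; field_simp; ring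
  -- compare constants
  have hc : (Mgen m K : ℝ≥0∞) ^ ((1-p)/p)
      ≤ ENNReal.ofReal (((lam + 2 : ℕ) : ℝ) ^ ((1:ℝ)/p - 1) * (n : ℝ) ^ (1/p - 1)) := by
    have hx : (0:ℝ) < ((lam + 2 : ℕ) : ℝ) := by positivity
    have hnR : (0:ℝ) < (n : ℝ) := by exact_mod_cast hn
    have e4 : ((lam + 2 : ℕ) : ℝ) ^ ((1:ℝ)/p - 1) * (n : ℝ) ^ ((1:ℝ)/p - 1)
        = ((((lam + 2) * n : ℕ) : ℝ)) ^ ((1:ℝ)/p - 1) := by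
      rw [← Real.mul_rpow hx.le hnR.le]
      push_cast
      ring_nf
    rw [e4, ← ENNReal.ofReal_rpow_of_pos (by positivity), ENNReal.ofReal_natCast]
    rw [hq]
    exact ENNReal.rpow_le_rpow (by exact_mod_cast hMK_le) hq0'
  calc ENNReal.ofReal ‖mfhat m μ f n‖
      ≤ (Mgen m K : ℝ≥0∞) ^ ((1-p)/p) * L ^ ((1:ℝ)/p) := key
    _ ≤ ENNReal.ofReal (((lam + 2 : ℕ) : ℝ) ^ ((1:ℝ)/p - 1) * (n : ℝ) ^ (1/p - 1))
          * L ^ ((1:ℝ)/p) := mul_le_mul_left hc _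
    _ = ENNReal.ofReal (((lam + 2 : ℕ) : ℝ) ^ ((1:ℝ)/p - 1) * (n : ℝ) ^ (1/p - 1))
          * HpNorm m μ p f := by rw [hHp]

end
end

section
/- Let 0 < p < 1. There exists a constant c_p > 0, depending only on p and λ = sup_k m_k, such that for every f ∈ L¹(G_m, μ) whose martingale maximal function sup_k |S_{M_k} f| belongs to L^p(μ), one has for every integer n ≥ 1: |f̂(n)| ≤ c_p · n^{1/p−1} · ‖sup_k |S_{M_k} f|‖_{L^p(μ)}. (Here (S_{M_k} f)_{k≥0} is the martingale generated by f, and ‖sup_k |S_{M_k} f|‖_{L^p} is its H_p-norm.) -/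
open MeasureTheory Filter ENNReal Finset

noncomputable section

namespace VF
variable {m : ℕ → ℕ}

lemma Mgen_pos (hm : ∀ k, 2 ≤ m k) (k : ℕ) : 0 < Mgen m k := by
  induction k with
  | zero => simp [Mgen]
  | succ k ih => have := hm k; have h2 : 0 < m k * Mgen m k := Nat.mul_pos (by omega) ih; exact h2

def emb (m : ℕ → ℕ) (N : ℕ) (a : ∀ i : Fin N, ZMod (m i)) : Gm m :=
  fun j => if h : j < N then a ⟨j, h⟩ else 0

lemma emb_apply_lt {N : ℕ} (a : ∀ i : Fin N, ZMod (m i)) {j : ℕ} (hj : j < N) :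
    emb m N a j = a ⟨j, hj⟩ := dif_pos hj

lemma measurable_cyl (N : ℕ) (x : Gm m) : MeasurableSet (cyl m N x) := by
  have : cyl m N x = ⋂ (j : ℕ) (_ : j < N), (fun y : Gm m => y j) ⁻¹' {x j} := by
    ext y; simp [cyl, Set.mem_iInter]
  rw [this]
  exact MeasurableSet.iInter fun j => MeasurableSet.iInter fun _ =>
    (measurable_pi_apply j) (measurableSet_singleton _)

lemma mem_cyl_iff {N : ℕ} (a : ∀ i : Fin N, ZMod (m i)) (x : Gm m) :
    x ∈ cyl m N (emb m N a) ↔ ∀ i : Fin N, x i = a i := by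
  constructor
  · intro h i; have := h i i.isLt; rwa [emb_apply_lt a i.isLt] at this
  · intro h j hj; rw [emb_apply_lt a hj]; exact h ⟨j, hj⟩

lemma iUnion_cyl [∀ i : ℕ, NeZero (m i)] (N : ℕ) :
    (⋃ a : ∀ i : Fin N, ZMod (m i), cyl m N (emb m N a)) = Set.univ := by
  ext x
  simp only [Set.mem_iUnion, Set.mem_univ, iff_true]
  exact ⟨fun i => x i, (mem_cyl_iff _ x).mpr fun i => rfl⟩

lemma pairwise_cyl [∀ i : ℕ, NeZero (m i)] (N : ℕ) :
    Pairwise (Function.onFun Disjoint (fun a : ∀ i : Fin N, ZMod (m i) => cyl m N (emb m N a))) := by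
  intro a b hab
  rw [Function.onFun, Set.disjoint_left]
  intro x hxa hxb
  apply hab
  funext i
  rw [← (mem_cyl_iff a x).mp hxa i, ← (mem_cyl_iff b x).mp hxb i]

lemma lintegral_partition [∀ i : ℕ, NeZero (m i)] (μ : Measure (Gm m)) (N : ℕ)
    (g : Gm m → ℝ≥0∞) :
    ∫⁻ x, g x ∂μ = ∑ a : ∀ i : Fin N, ZMod (m i), ∫⁻ x in cyl m N (emb m N a), g x ∂μ := by
  conv_lhs => rw [← setLIntegral_univ, ← iUnion_cyl N]
  rw [lintegral_iUnion (fun a => measurable_cyl N _) (pairwise_cyl N) g, tsum_fintype]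

lemma indicator_decomp [∀ i : ℕ, NeZero (m i)] {N : ℕ} (h : Gm m → ℂ)
    (hconst : ∀ x y : Gm m, (∀ j < N, x j = y j) → h x = h y) (x : Gm m) :
    h x = ∑ a : ∀ i : Fin N, ZMod (m i), (cyl m N (emb m N a)).indicator (fun _ => h (emb m N a)) x := by
  classical
  have hx : x ∈ cyl m N (emb m N (fun i => x i)) := (mem_cyl_iff _ x).mpr fun i => rfl
  rw [Finset.sum_eq_single (fun i : Fin N => x i)]
  · rw [Set.indicator_of_mem hx]
    exact hconst _ _ (fun j hj => (emb_apply_lt (fun i : Fin N => x (i:ℕ)) hj).symm)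
  · intro b _ hb
    rw [Set.indicator_of_notMem]
    intro hmem
    apply hb
    funext i
    rw [(mem_cyl_iff b x).mp hmem i]
  · intro hmem; exact absurd (Finset.mem_univ _) hmem

lemma integral_eq_sum [∀ i : ℕ, NeZero (m i)] (hm : ∀ k, 2 ≤ m k)
    (μ : Measure (Gm m)) (hμ : ∀ n x, μ (cyl m n x) = ((Mgen m n : ℝ≥0∞))⁻¹)
    {N : ℕ} (h : Gm m → ℂ)
    (hconst : ∀ x y : Gm m, (∀ j < N, x j = y j) → h x = h y) :
    ∫ x, h x ∂μ = ∑ a : ∀ i : Fin N, ZMod (m i), ((Mgen m N : ℝ))⁻¹ • h (emb m N a) := by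
  have hint : ∀ a : ∀ i : Fin N, ZMod (m i),
      Integrable ((cyl m N (emb m N a)).indicator (fun _ => h (emb m N a))) μ := by
    intro a
    rw [integrable_indicator_iff (measurable_cyl N _)]
    refine integrableOn_const ?_
    rw [hμ]
    exact (ENNReal.inv_lt_top.mpr (by exact_mod_cast Mgen_pos hm N)).ne
  calc ∫ x, h x ∂μ
      = ∫ x, (∑ a : ∀ i : Fin N, ZMod (m i),
          (cyl m N (emb m N a)).indicator (fun _ => h (emb m N a)) x) ∂μ := by
        congr 1; funext x; exact indicator_decomp h hconst x
    _ = ∑ a : ∀ i : Fin N, ZMod (m i), ∫ x, (cyl m N (emb m N a)).indicator (fun _ => h (emb m N a)) x ∂μ :=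
        integral_finset_sum _ (fun a _ => hint a)
    _ = ∑ a : ∀ i : Fin N, ZMod (m i), ((Mgen m N : ℝ))⁻¹ • h (emb m N a) := by
        refine Finset.sum_congr rfl (fun a _ => ?_)
        rw [integral_indicator_const _ (measurable_cyl N _), measureReal_def, hμ]
        congr 1
        simp [ENNReal.toReal_inv]

lemma Mgen_mono (hm : ∀ k, 2 ≤ m k) {i N : ℕ} (h : i ≤ N) : Mgen m i ≤ Mgen m N := by
  induction N with
  | zero => have h0 : i = 0 := by omega
            rw [h0]
  | succ N ih =>
    rcases Nat.lt_or_ge i (N+1) with h'|h'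
    · have h2 := hm N
      have h3 := Mgen_pos hm N
      calc Mgen m i ≤ Mgen m N := ih (by omega)
        _ ≤ m N * Mgen m N := Nat.le_mul_of_pos_left _ (by omega)
        _ = Mgen m (N+1) := rfl
    · have hi : i = N+1 := by omega
      rw [hi]

lemma Mgen_dvd (hm : ∀ k, 2 ≤ m k) {i N : ℕ} (h : i ≤ N) : Mgen m i ∣ Mgen m N := by
  induction N with
  | zero => have h0 : i = 0 := by omega
            rw [h0]
  | succ N ih =>
    rcases Nat.lt_or_ge i (N+1) with h'|h'
    · exact Dvd.dvd.mul_left (ih (by omega)) _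
    · have hi : i = N+1 := by omega
      rw [hi]

lemma succ_le_Mgen (hm : ∀ k, 2 ≤ m k) (k : ℕ) : k + 1 ≤ Mgen m k := by
  induction k with
  | zero => simp [Mgen]
  | succ k ih =>
    have := hm k
    calc k + 2 ≤ 2 * (k+1) := by omega
      _ ≤ m k * Mgen m k := Nat.mul_le_mul (by omega) ih

lemma digit_eq_zero {n i : ℕ} (hn : n < Mgen m i) : digit m n i = 0 := by
  simp [digit, Nat.div_eq_of_lt hn]

lemma digit_lt (hm : ∀ k, 2 ≤ m k) (n i : ℕ) : digit m n i < m i :=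
  Nat.mod_lt _ (by have := hm i; omega)

lemma digit_sum (hm : ∀ k, 2 ≤ m k) {N n : ℕ} (hn : n < Mgen m N) :
    ∑ i ∈ Finset.range N, digit m n i * Mgen m i = n := by
  induction N generalizing n with
  | zero => simp [Mgen] at hn ⊢; omega
  | succ N ih =>
    have hMN := Mgen_pos hm N
    set q := n / Mgen m N with hq
    set r := n % Mgen m N with hr
    have hrlt : r < Mgen m N := Nat.mod_lt _ hMN
    have hqlt : q < m N := by
      rw [hq, Nat.div_lt_iff_lt_mul hMN]
      calc n < Mgen m (N+1) := hn
        _ = m N * Mgen m N := rfl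
    have hdigN : digit m n N = q := by
      rw [digit, ← hq, Nat.mod_eq_of_lt hqlt]
    have hdig : ∀ i < N, digit m n i = digit m r i := by
      intro i hi
      have hdvd : Mgen m (i+1) ∣ Mgen m N := Mgen_dvd hm (by omega)
      obtain ⟨s, hs⟩ := hdvd
      have hn_eq : n = Mgen m N * q + r := (Nat.div_add_mod n (Mgen m N)).symm
      have hMi := Mgen_pos hm i
      have hdiv : n / Mgen m i = m i * (s * q) + r / Mgen m i := by
        rw [hn_eq, hs]
        have hh : Mgen m (i+1) = m i * Mgen m i := rfl
        rw [hh]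
        rw [show m i * Mgen m i * s * q = Mgen m i * (m i * (s * q)) by ring]
        rw [Nat.mul_add_div hMi]
      rw [digit, digit, hdiv, Nat.mul_add_mod]
    rw [Finset.sum_range_succ, hdigN]
    rw [Finset.sum_congr rfl (fun i hi => by rw [hdig i (Finset.mem_range.mp hi)])]
    rw [ih hrlt]
    have h1 := Nat.div_add_mod n (Mgen m N)
    have h2 : q * Mgen m N = Mgen m N * (n / Mgen m N) := by rw [hq]; ring
    omega

lemma exists_k (hm : ∀ k, 2 ≤ m k) {n : ℕ} (hn : 1 ≤ n) :
    ∃ k, Mgen m k ≤ n ∧ n < Mgen m (k+1) := by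
  have hex : ∃ k, n < Mgen m (k+1) := ⟨n, by have := succ_le_Mgen hm (n+1); omega⟩
  classical
  refine ⟨Nat.find hex, ?_, Nat.find_spec hex⟩
  rcases Nat.eq_zero_or_pos (Nat.find hex) with h0|h0
  · rw [h0]; simpa [Mgen] using hn
  · have hmin := Nat.find_min hex (m := Nat.find hex - 1) (by omega)
    have hk : Nat.find hex - 1 + 1 = Nat.find hex := by omega
    rw [hk] at hmin; omega

lemma psi_eq_prod (hm : ∀ k, 2 ≤ m k) {N n : ℕ} (hn : n < Mgen m N) (x : Gm m) :
    psi m n x = ∏ i ∈ Finset.range N, rade m i x ^ digit m n i := by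
  unfold psi
  rcases le_or_gt (n+1) N with h|h
  · apply Finset.prod_subset (Finset.range_subset_range.mpr h)
    intro i _ hi
    rw [Finset.mem_range] at hi
    have : n < Mgen m i := by
      have := succ_le_Mgen hm i; omega
    rw [digit_eq_zero this, pow_zero]
  · symm
    apply Finset.prod_subset (Finset.range_subset_range.mpr (by omega))
    intro i _ hi
    rw [Finset.mem_range] at hi
    have : n < Mgen m i := lt_of_lt_of_le hn (Mgen_mono hm (by omega))
    rw [digit_eq_zero this, pow_zero]

lemma psi_const (hm : ∀ k, 2 ≤ m k) {N n : ℕ} (hn : n < Mgen m N) {x y : Gm m}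
    (hxy : ∀ j < N, y j = x j) : psi m n y = psi m n x := by
  rw [psi_eq_prod hm hn, psi_eq_prod hm hn]
  refine Finset.prod_congr rfl (fun i hi => ?_)
  rw [Finset.mem_range] at hi
  unfold rade
  rw [hxy i hi]

lemma abs_rade (k : ℕ) (x : Gm m) : ‖rade m k x‖ = 1 := by
  have h : rade m k x
      = Complex.exp (((2 * Real.pi * ((x k).val) / (m k) : ℝ) : ℂ) * Complex.I) := by
    unfold rade; congr 1; push_cast; ring
  rw [h, Complex.norm_exp_ofReal_mul_I]

lemma abs_psi (n : ℕ) (x : Gm m) : ‖psi m n x‖ = 1 := by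
  unfold psi
  rw [norm_prod]
  rw [Finset.prod_eq_one]
  intro i _
  rw [norm_pow, abs_rade, one_pow]

lemma sum_val {M : ℕ} [NeZero M] (f : ℕ → ℂ) :
    ∑ c : ZMod M, f (ZMod.val c) = ∑ t ∈ Finset.range M, f t := by
  refine Finset.sum_nbij' (fun c => ZMod.val c) (fun t => (t : ZMod M)) ?_ ?_ ?_ ?_ ?_
  · intro a _; exact Finset.mem_range.mpr (ZMod.val_lt a)
  · intro t _; exact Finset.mem_univ _
  · intro a _; exact ZMod.natCast_rightInverse a
  · intro t ht; exact ZMod.val_cast_of_lt (Finset.mem_range.mp ht)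
  · intro a _; rfl

lemma root_sum {M : ℕ} (hM : 0 < M) (d : ℤ) (hd : ¬ (M:ℤ) ∣ d) :
    ∑ t ∈ Finset.range M, Complex.exp (2 * Real.pi * Complex.I * d / M) ^ t = 0 := by
  set ω := Complex.exp (2 * Real.pi * Complex.I * d / M) with hω
  have hMne : (M:ℂ) ≠ 0 := Nat.cast_ne_zero.mpr hM.ne'
  have hω1 : ω ≠ 1 := by
    intro h
    rw [hω] at h
    rcases Complex.exp_eq_one_iff.mp h with ⟨k, hk⟩
    apply hd
    refine ⟨k, ?_⟩
    have hπ : (Real.pi : ℂ) ≠ 0 := by exact_mod_cast Real.pi_ne_zero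
    have hI := Complex.I_ne_zero
    field_simp at hk
    have hdk : (d : ℂ) = (M : ℂ) * k := by
      have h2 : (2:ℂ) * Real.pi * Complex.I ≠ 0 := by
        simp [hπ, hI, Complex.I_ne_zero]
      apply mul_left_cancel₀ h2
      rw [show (2:ℂ) * Real.pi * Complex.I * ((M:ℂ) * k) = (k:ℂ) * (2 * Real.pi * Complex.I) * M by ring]
      linear_combination (2 * (Real.pi:ℂ) * Complex.I) * hk
    exact_mod_cast hdk
  have hωM : ω ^ M = 1 := by
    rw [hω, ← Complex.exp_nat_mul]
    have harg : (M:ℂ) * (2 * Real.pi * Complex.I * d / M) = d * (2 * Real.pi * Complex.I) := by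
      field_simp
    rw [harg]
    exact Complex.exp_int_mul_two_pi_mul_I d
  rw [geom_sum_eq hω1, hωM, sub_self, zero_div]

lemma factor_sum {M : ℕ} [NeZero M] {u v : ℕ} (hu : u < M) (hv : v < M) :
    ∑ c : ZMod M, (Complex.exp (2 * Real.pi * Complex.I * ((ZMod.val c : ℕ):ℂ) / M)) ^ u *
      ((starRingEnd ℂ) (Complex.exp (2 * Real.pi * Complex.I * ((ZMod.val c : ℕ):ℂ) / M))) ^ v
      = if u = v then (M : ℂ) else 0 := by
  have hM : 0 < M := Nat.pos_of_ne_zero (NeZero.ne M)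
  have key : ∀ θ : ℕ, (Complex.exp (2 * Real.pi * Complex.I * (θ:ℂ) / M)) ^ u *
      ((starRingEnd ℂ) (Complex.exp (2 * Real.pi * Complex.I * (θ:ℂ) / M))) ^ v
      = (Complex.exp (2 * Real.pi * Complex.I * ((((u:ℤ) - (v:ℤ)) : ℤ) : ℂ) / M)) ^ θ := by
    intro θ
    rw [← Complex.exp_conj]
    rw [← Complex.exp_nat_mul, ← Complex.exp_nat_mul, ← Complex.exp_add, ← Complex.exp_nat_mul]
    congr 1
    have hconj : (starRingEnd ℂ) (2 * Real.pi * Complex.I * (θ:ℂ) / M)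
        = -(2 * Real.pi * Complex.I * (θ:ℂ) / M) := by
      rw [map_div₀]
      simp [Complex.conj_I, map_ofNat]
      ring
    rw [hconj]
    push_cast
    ring
  rw [Finset.sum_congr rfl (fun c _ => key (ZMod.val c))]
  rw [sum_val (fun t => (Complex.exp (2 * Real.pi * Complex.I * ((((u:ℤ) - (v:ℤ)) : ℤ) : ℂ) / M)) ^ t)]
  by_cases huv : u = v
  · subst huv
    simp
  · rw [if_neg huv]
    apply root_sum hM
    intro ⟨t, ht⟩
    have hb1 : ((u:ℤ) - v) < M := by omega
    have hb2 : -(M:ℤ) < ((u:ℤ) - v) := by omega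
    rw [ht] at hb1 hb2
    have ht1 : t < 1 := by
      by_contra hc
      push_neg at hc
      have : (M:ℤ) * 1 ≤ M * t := by
        apply mul_le_mul_of_nonneg_left hc (by positivity)
      omega
    have ht2 : -1 < t := by
      by_contra hc
      push_neg at hc
      have : (M:ℤ) * t ≤ M * (-1) := by
        apply mul_le_mul_of_nonneg_left hc (by positivity)
      omega
    have ht0 : t = 0 := by omega
    rw [ht0, mul_zero] at ht
    omega

lemma Mgen_eq_prod (N : ℕ) : (Mgen m N : ℂ) = ∏ i ∈ Finset.range N, (m i : ℂ) := by
  induction N with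
  | zero => simp [Mgen]
  | succ N ih =>
    rw [Finset.prod_range_succ, ← ih]
    show ((m N * Mgen m N : ℕ) : ℂ) = _
    push_cast
    ring

lemma psi_orth [∀ i : ℕ, NeZero (m i)] (hm : ∀ k, 2 ≤ m k)
    (μ : Measure (Gm m)) (hμ : ∀ n x, μ (cyl m n x) = ((Mgen m n : ℝ≥0∞))⁻¹)
    {N j n : ℕ} (hj : j < Mgen m N) (hn : n < Mgen m N) :
    ∫ x, psi m j x * (starRingEnd ℂ) (psi m n x) ∂μ = if j = n then 1 else 0 := by
  classical
  have hMne : (Mgen m N : ℂ) ≠ 0 := Nat.cast_ne_zero.mpr (Mgen_pos hm N).ne'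
  have hconst : ∀ x y : Gm m, (∀ i < N, x i = y i) →
      psi m j x * (starRingEnd ℂ) (psi m n x) = psi m j y * (starRingEnd ℂ) (psi m n y) := by
    intro x y hxy
    rw [psi_const hm hj hxy, psi_const hm hn hxy]
  rw [integral_eq_sum hm μ hμ _ hconst]
  have hterm : ∀ a : ∀ i : Fin N, ZMod (m i),
      psi m j (emb m N a) * (starRingEnd ℂ) (psi m n (emb m N a))
      = ∏ i : Fin N,
          ((Complex.exp (2 * Real.pi * Complex.I * ((ZMod.val (a i) : ℕ):ℂ) / m i)) ^ (digit m j i) *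
            ((starRingEnd ℂ) (Complex.exp (2 * Real.pi * Complex.I * ((ZMod.val (a i) : ℕ):ℂ) / m i))) ^ (digit m n i)) := by
    intro a
    rw [psi_eq_prod hm hj, psi_eq_prod hm hn, map_prod, ← Finset.prod_mul_distrib]
    rw [← Fin.prod_univ_eq_prod_range
      (fun i => rade m i (emb m N a) ^ digit m j i
        * (starRingEnd ℂ) (rade m i (emb m N a) ^ digit m n i)) N]
    refine Finset.prod_congr rfl (fun i _ => ?_)
    have ha : emb m N a (i:ℕ) = a i := emb_apply_lt a i.isLt
    rw [map_pow]
    unfold rade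
    rw [ha]
  rw [Finset.sum_congr rfl (fun a _ => by rw [hterm a])]
  rw [← Finset.smul_sum]
  have hsum : (∑ a : ∀ i : Fin N, ZMod (m i), ∏ i : Fin N,
      ((Complex.exp (2 * Real.pi * Complex.I * ((ZMod.val (a i) : ℕ):ℂ) / m i)) ^ (digit m j i) *
        ((starRingEnd ℂ) (Complex.exp (2 * Real.pi * Complex.I * ((ZMod.val (a i) : ℕ):ℂ) / m i))) ^ (digit m n i)))
      = ∏ i : Fin N, (if digit m j (i:ℕ) = digit m n (i:ℕ) then ((m (i:ℕ) : ℂ)) else 0) := by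
    rw [← Fintype.piFinset_univ]
    rw [← Finset.prod_univ_sum (fun i : Fin N => (Finset.univ : Finset (ZMod (m (i:ℕ)))))
      (fun i c => (Complex.exp (2 * Real.pi * Complex.I * ((ZMod.val c : ℕ):ℂ) / m (i:ℕ))) ^ (digit m j (i:ℕ)) *
        ((starRingEnd ℂ) (Complex.exp (2 * Real.pi * Complex.I * ((ZMod.val c : ℕ):ℂ) / m (i:ℕ)))) ^ (digit m n (i:ℕ)))]
    refine Finset.prod_congr rfl (fun i _ => ?_)
    exact factor_sum (digit_lt hm j (i:ℕ)) (digit_lt hm n (i:ℕ))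
  rw [hsum]
  by_cases hjn : j = n
  · subst hjn
    simp only [eq_self_iff_true, if_true]
    have h2 : ∏ i : Fin N, (m (i:ℕ) : ℂ) = ∏ i ∈ Finset.range N, (m i : ℂ) :=
      Fin.prod_univ_eq_prod_range (fun t => (m t : ℂ)) N
    rw [h2, ← Mgen_eq_prod]
    rw [Complex.real_smul]
    push_cast
    rw [inv_mul_cancel₀ hMne]
  · rw [if_neg hjn]
    have hex : ∃ i : Fin N, digit m j (i:ℕ) ≠ digit m n (i:ℕ) := by
      by_contra hc
      push_neg at hc
      apply hjn
      have hj2 := digit_sum hm hj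
      have hn2 := digit_sum hm hn
      rw [← hj2, ← hn2]
      refine Finset.sum_congr rfl (fun i hi => ?_)
      rw [Finset.mem_range] at hi
      rw [hc ⟨i, hi⟩]
    obtain ⟨i0, hi0⟩ := hex
    have hz : (∏ i : Fin N, if digit m j (i:ℕ) = digit m n (i:ℕ) then ((m (i:ℕ)) : ℂ) else 0) = 0 :=
      Finset.prod_eq_zero (Finset.mem_univ i0) (if_neg hi0)
    rw [hz, smul_zero]

lemma measurable_rade [∀ i : ℕ, NeZero (m i)] (k : ℕ) : Measurable (rade m k) := by
  have h1 : Measurable fun x : Gm m => x k := measurable_pi_apply k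
  exact (measurable_of_countable
    (fun c : ZMod (m k) => Complex.exp (2 * Real.pi * Complex.I * ((ZMod.val c : ℕ):ℂ) / m k))).comp h1

lemma measurable_psi [∀ i : ℕ, NeZero (m i)] (n : ℕ) : Measurable (psi m n) :=
  Finset.measurable_prod _ fun i _ => (measurable_rade i).pow_const _

lemma isFiniteMeasure (μ : Measure (Gm m))
    (hμ : ∀ n x, μ (cyl m n x) = ((Mgen m n : ℝ≥0∞))⁻¹) : IsFiniteMeasure μ := by
  constructor
  have huniv : (Set.univ : Set (Gm m)) = cyl m 0 (fun _ => 0) := by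
    ext y; simp [cyl]
  rw [huniv, hμ]
  simp [Mgen]

lemma nnnorm_psi (n : ℕ) (x : Gm m) : ‖psi m n x‖₊ = 1 := by
  ext
  simp [coe_nnnorm, abs_psi]

lemma integrable_psi_mul [∀ i : ℕ, NeZero (m i)] (μ : Measure (Gm m)) [IsFiniteMeasure μ]
    (k n : ℕ) :
    Integrable (fun x => psi m k x * (starRingEnd ℂ) (psi m n x)) μ := by
  refine Integrable.mono' (integrable_const (1:ℝ)) ?_ (Filter.Eventually.of_forall ?_)
  · exact ((measurable_psi k).mul (Complex.continuous_conj.measurable.comp (measurable_psi n))).aestronglyMeasurable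
  · intro x
    rw [norm_mul]
    have h1 : ‖psi m k x‖ = 1 := by rw [abs_psi]
    have h2 : ‖(starRingEnd ℂ) (psi m n x)‖ = 1 := by
      rw [RCLike.norm_conj, abs_psi]
    rw [h1, h2, mul_one]

lemma Spart_mul_eq (μ : Measure (Gm m)) (f : Gm m → ℂ) (L n : ℕ) (x : Gm m) :
    Spart m μ f L x * (starRingEnd ℂ) (psi m n x)
      = ∑ k ∈ Finset.range L, fcoef m μ f k * (psi m k x * (starRingEnd ℂ) (psi m n x)) := by
  unfold Spart
  rw [Finset.sum_mul]
  exact Finset.sum_congr rfl fun k _ => by ring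

lemma integrable_Spart_mul [∀ i : ℕ, NeZero (m i)] (μ : Measure (Gm m)) [IsFiniteMeasure μ]
    (f : Gm m → ℂ) (L n : ℕ) :
    Integrable (fun x => Spart m μ f L x * (starRingEnd ℂ) (psi m n x)) μ := by
  have heq : (fun x => Spart m μ f L x * (starRingEnd ℂ) (psi m n x))
      = fun x => ∑ k ∈ Finset.range L, fcoef m μ f k * (psi m k x * (starRingEnd ℂ) (psi m n x)) :=
    funext fun x => Spart_mul_eq μ f L n x
  rw [heq]
  exact integrable_finset_sum _ fun k _ => (integrable_psi_mul μ k n).const_mul _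

lemma integral_Spart_mul [∀ i : ℕ, NeZero (m i)] (hm : ∀ k, 2 ≤ m k)
    (μ : Measure (Gm m)) [IsFiniteMeasure μ]
    (hμ : ∀ n x, μ (cyl m n x) = ((Mgen m n : ℝ≥0∞))⁻¹)
    (f : Gm m → ℂ) {N L n : ℕ} (hL : L ≤ Mgen m N) (hn : n < Mgen m N) :
    ∫ x, Spart m μ f L x * (starRingEnd ℂ) (psi m n x) ∂μ
      = if n < L then fcoef m μ f n else 0 := by
  classical
  have heq : (fun x => Spart m μ f L x * (starRingEnd ℂ) (psi m n x))
      = fun x => ∑ k ∈ Finset.range L, fcoef m μ f k * (psi m k x * (starRingEnd ℂ) (psi m n x)) :=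
    funext fun x => Spart_mul_eq μ f L n x
  rw [heq, integral_finset_sum _ fun k _ => (integrable_psi_mul μ k n).const_mul _]
  have hterm : ∀ k ∈ Finset.range L,
      (∫ x, fcoef m μ f k * (psi m k x * (starRingEnd ℂ) (psi m n x)) ∂μ)
        = if k = n then fcoef m μ f k else 0 := by
    intro k hk
    rw [Finset.mem_range] at hk
    rw [MeasureTheory.integral_const_mul, psi_orth hm μ hμ (lt_of_lt_of_le hk hL) hn]
    by_cases h : k = n
    · rw [if_pos h, if_pos h, mul_one]
    · rw [if_neg h, if_neg h, mul_zero]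
  rw [Finset.sum_congr rfl hterm, Finset.sum_ite_eq' (Finset.range L) n (fun k => fcoef m μ f k)]
  simp [Finset.mem_range]

lemma sum_rpow_le {α : Type*} (s : Finset α) (g : α → ℝ≥0∞) {q : ℝ}
    (hq : 1 ≤ q) : ∑ a ∈ s, g a ^ q ≤ (∑ a ∈ s, g a) ^ q := by
  classical
  induction s using Finset.induction with
  | empty => simp [ENNReal.zero_rpow_of_pos (by linarith : (0:ℝ) < q)]
  | insert x s hx ih =>
    rw [Finset.sum_insert hx, Finset.sum_insert hx]
    calc _ ≤ _ + _ := add_le_add_right ih _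
      _ ≤ _ := ENNReal.add_rpow_le_rpow_add _ _ hq

lemma Spart_const (hm : ∀ k, 2 ≤ m k) (μ : Measure (Gm m)) (f : Gm m → ℂ) {N L : ℕ}
    (hL : L ≤ Mgen m N) {x y : Gm m} (hxy : ∀ j < N, y j = x j) :
    Spart m μ f L y = Spart m μ f L x := by
  unfold Spart
  refine Finset.sum_congr rfl fun t ht => ?_
  rw [Finset.mem_range] at ht
  rw [psi_const hm (lt_of_lt_of_le ht hL) hxy]

lemma measurable_Spart [∀ i : ℕ, NeZero (m i)] (μ : Measure (Gm m)) (f : Gm m → ℂ) (L : ℕ) :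
    Measurable (Spart m μ f L) :=
  Finset.measurable_sum _ fun k _ => (measurable_psi k).const_mul _

end VF

/-- For `0 < p < 1` there is `c_p > 0`, depending only on `p` and `λ = sup_k m_k`,
such that every `f ∈ L¹(G_m)` whose martingale maximal function
`sup_k |S_{M_k} f|` is in `L^p` satisfies
`|f̂(n)| ≤ c_p n^{1/p-1} ‖sup_k |S_{M_k} f|‖_{L^p}` for all `n ≥ 1`. -/
theorem vilenkin_fourier_coefficient_bound_function
    (p : ℝ) (hp0 : 0 < p) (hp1 : p < 1) (lam : ℕ) :
    ∃ c : ℝ, 0 < c ∧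
      ∀ (m : ℕ → ℕ), (∀ k, 2 ≤ m k) → (∀ k, m k ≤ lam) →
      ∀ (μ : Measure (Gm m)), (∀ n x, μ (cyl m n x) = ((Mgen m n : ℝ≥0∞))⁻¹) →
      ∀ f : Gm m → ℂ, Integrable f μ →
      HpNorm m μ p (fun k => Spart m μ f (Mgen m k)) < ⊤ →
      ∀ n : ℕ, 1 ≤ n →
        ENNReal.ofReal ‖fcoef m μ f n‖ ≤
          ENNReal.ofReal (c * (n : ℝ) ^ (1 / p - 1)) *
            HpNorm m μ p (fun k => Spart m μ f (Mgen m k)) := by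
  classical
  have hq1 : 1 ≤ 1 / p := one_le_one_div hp0 hp1.le
  have hθ : 0 ≤ 1 / p - 1 := by linarith
  refine ⟨2 * ((lam : ℝ) + 2) ^ (1 / p - 1), by positivity, ?_⟩
  intro m hm hlam μ hμ f hf hHp n hn
  haveI : ∀ i : ℕ, NeZero (m i) := fun i => ⟨by have := hm i; omega⟩
  haveI : IsFiniteMeasure μ := VF.isFiniteMeasure μ hμ
  obtain ⟨k, hk1, hk2⟩ := VF.exists_k hm hn
  set N := k + 1 with hN
  set M := Mgen m N with hMdef
  have hM0 : (M : ℝ≥0∞) ≠ 0 := by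
    exact_mod_cast (VF.Mgen_pos hm N).ne'
  have hMtop : (M : ℝ≥0∞) ≠ ⊤ := ENNReal.natCast_ne_top M
  set u : Gm m → ℝ≥0∞ := fun x => ⨆ j, (‖Spart m μ f (Mgen m j) x‖₊ : ℝ≥0∞) with hu
  have hu_meas : Measurable u := by
    apply Measurable.iSup
    intro j
    exact (VF.measurable_Spart μ f (Mgen m j)).nnnorm.coe_nnreal_ennreal
  set d : Gm m → ℂ := fun x => Spart m μ f (Mgen m N) x - Spart m μ f (Mgen m k) x with hd
  -- Step 1 : fcoef f n = ∫ d ψ̄ₙ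
  have hstep1 : fcoef m μ f n = ∫ x, d x * (starRingEnd ℂ) (psi m n x) ∂μ := by
    have hsplit : (fun x => d x * (starRingEnd ℂ) (psi m n x))
        = fun x => Spart m μ f (Mgen m N) x * (starRingEnd ℂ) (psi m n x)
            - Spart m μ f (Mgen m k) x * (starRingEnd ℂ) (psi m n x) := by
      funext x; rw [hd]; ring
    rw [hsplit, integral_sub (VF.integrable_Spart_mul μ f _ n) (VF.integrable_Spart_mul μ f _ n)]
    rw [VF.integral_Spart_mul hm μ hμ f (le_refl (Mgen m N)) hk2,
        VF.integral_Spart_mul hm μ hμ f (VF.Mgen_mono hm (by omega : k ≤ N)) hk2]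
    rw [if_pos hk2, if_neg (by omega : ¬ n < Mgen m k), sub_zero]
  -- Step 2 : |fcoef f n| ≤ ∫⁻ ‖d‖
  have hstep2 : ENNReal.ofReal ‖fcoef m μ f n‖ ≤ ∫⁻ x, (‖d x‖₊ : ℝ≥0∞) ∂μ := by
    rw [hstep1]
    have h1 : ENNReal.ofReal ‖∫ x, d x * (starRingEnd ℂ) (psi m n x) ∂μ‖
        = (‖∫ x, d x * (starRingEnd ℂ) (psi m n x) ∂μ‖₊ : ℝ≥0∞) := by
      rw [ofReal_norm]; rfl
    rw [h1]
    refine le_trans (MeasureTheory.enorm_integral_le_lintegral_enorm _) (le_of_eq ?_)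
    apply lintegral_congr
    intro x
    have h2 : ‖(starRingEnd ℂ) (psi m n x)‖₊ = 1 := by
      rw [show (starRingEnd ℂ) (psi m n x) = star (psi m n x) from rfl, nnnorm_star,
        VF.nnnorm_psi]
    show (‖d x * (starRingEnd ℂ) (psi m n x)‖₊ : ℝ≥0∞) = _
    rw [nnnorm_mul, h2, mul_one]
  -- cylinder-wise data
  set D : (∀ i : Fin N, ZMod (m i)) → ℝ≥0∞ := fun a => (‖d (VF.emb m N a)‖₊ : ℝ≥0∞) with hD
  set B : (∀ i : Fin N, ZMod (m i)) → ℝ≥0∞ :=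
    fun a => ∫⁻ x in cyl m N (VF.emb m N a), u x ^ p ∂μ with hB
  have hdconst : ∀ (a : ∀ i : Fin N, ZMod (m i)), ∀ y ∈ cyl m N (VF.emb m N a),
      d y = d (VF.emb m N a) := by
    intro a y hy
    rw [hd]
    simp only []
    rw [VF.Spart_const hm μ f (le_refl (Mgen m N)) hy,
        VF.Spart_const hm μ f (VF.Mgen_mono hm (by omega : k ≤ N)) hy]
  -- Step 3 : ∫⁻‖d‖ = ∑ D a / M
  have hstep3 : ∫⁻ x, (‖d x‖₊ : ℝ≥0∞) ∂μ
      = ∑ a : ∀ i : Fin N, ZMod (m i), D a * (M : ℝ≥0∞)⁻¹ := by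
    rw [VF.lintegral_partition μ N]
    refine Finset.sum_congr rfl fun a _ => ?_
    have hcongr : ∫⁻ x in cyl m N (VF.emb m N a), (‖d x‖₊ : ℝ≥0∞) ∂μ
        = ∫⁻ _ in cyl m N (VF.emb m N a), D a ∂μ := by
      refine setLIntegral_congr_fun (VF.measurable_cyl N _) (fun y hy => ?_)
      rw [hD]
      simp only []
      rw [hdconst a y hy]
    rw [hcongr, MeasureTheory.setLIntegral_const, hμ]
  -- Step 4 : D a ≤ 2 * (B a * M)^(1/p)
  have hstep4 : ∀ a : ∀ i : Fin N, ZMod (m i), D a ≤ 2 * (B a * (M : ℝ≥0∞)) ^ (1 / p) := by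
    intro a
    have hub : ∀ y ∈ cyl m N (VF.emb m N a), D a ≤ 2 * u y := by
      intro y hy
      rw [hD]
      simp only []
      rw [← hdconst a y hy, hd]
      simp only []
      calc (‖Spart m μ f (Mgen m N) y - Spart m μ f (Mgen m k) y‖₊ : ℝ≥0∞)
          ≤ (‖Spart m μ f (Mgen m N) y‖₊ : ℝ≥0∞) + (‖Spart m μ f (Mgen m k) y‖₊ : ℝ≥0∞) := by
            exact_mod_cast nnnorm_sub_le _ _
        _ ≤ u y + u y := add_le_add
            (le_iSup (fun j => (‖Spart m μ f (Mgen m j) y‖₊ : ℝ≥0∞)) N)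
            (le_iSup (fun j => (‖Spart m μ f (Mgen m j) y‖₊ : ℝ≥0∞)) k)
        _ = 2 * u y := (two_mul _).symm
    have hBa : D a ^ p * (M : ℝ≥0∞)⁻¹ ≤ 2 ^ p * B a := by
      calc D a ^ p * (M : ℝ≥0∞)⁻¹
          = ∫⁻ _ in cyl m N (VF.emb m N a), D a ^ p ∂μ := by
            rw [MeasureTheory.setLIntegral_const, hμ]
        _ ≤ ∫⁻ y in cyl m N (VF.emb m N a), 2 ^ p * u y ^ p ∂μ := by
            refine setLIntegral_mono (by fun_prop) fun y hy => ?_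
            calc D a ^ p ≤ (2 * u y) ^ p := ENNReal.rpow_le_rpow (hub y hy) hp0.le
              _ = 2 ^ p * u y ^ p := ENNReal.mul_rpow_of_nonneg _ _ hp0.le
        _ = 2 ^ p * B a := by
            rw [hB]
            simp only []
            rw [lintegral_const_mul _ (hu_meas.pow_const p)]
    have hBa2 : D a ^ p ≤ 2 ^ p * (B a * (M : ℝ≥0∞)) := by
      have h3 := mul_le_mul_left hBa (M : ℝ≥0∞)
      rwa [mul_assoc, ENNReal.inv_mul_cancel hM0 hMtop, mul_one, mul_assoc] at h3
    calc D a = (D a ^ p) ^ (1 / p) := by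
          rw [← ENNReal.rpow_mul, mul_one_div_cancel hp0.ne', ENNReal.rpow_one]
      _ ≤ (2 ^ p * (B a * (M : ℝ≥0∞))) ^ (1 / p) :=
          ENNReal.rpow_le_rpow hBa2 (by positivity)
      _ = 2 * (B a * (M : ℝ≥0∞)) ^ (1 / p) := by
          rw [ENNReal.mul_rpow_of_nonneg _ _ (by positivity : (0:ℝ) ≤ 1/p),
            ← ENNReal.rpow_mul, mul_one_div_cancel hp0.ne', ENNReal.rpow_one]
  -- Step 5 : summation
  have hsumB : ∑ a : ∀ i : Fin N, ZMod (m i), B a = ∫⁻ x, u x ^ p ∂μ :=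
    (VF.lintegral_partition μ N _).symm
  have hstep5 : ∫⁻ x, (‖d x‖₊ : ℝ≥0∞) ∂μ
      ≤ 2 * (M : ℝ≥0∞) ^ (1 / p - 1) * (∫⁻ x, u x ^ p ∂μ) ^ (1 / p) := by
    rw [hstep3]
    calc ∑ a : ∀ i : Fin N, ZMod (m i), D a * (M : ℝ≥0∞)⁻¹
        ≤ ∑ a : ∀ i : Fin N, ZMod (m i), (2 * (B a * (M : ℝ≥0∞)) ^ (1 / p)) * (M : ℝ≥0∞)⁻¹ :=
          Finset.sum_le_sum fun a _ => mul_le_mul_left (hstep4 a) _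
      _ = 2 * (M : ℝ≥0∞) ^ (1 / p) * (M : ℝ≥0∞)⁻¹ * ∑ a : ∀ i : Fin N, ZMod (m i), B a ^ (1 / p) := by
          rw [Finset.mul_sum]
          refine Finset.sum_congr rfl fun a _ => ?_
          rw [ENNReal.mul_rpow_of_nonneg _ _ (by positivity : (0:ℝ) ≤ 1/p)]
          ring
      _ ≤ 2 * (M : ℝ≥0∞) ^ (1 / p) * (M : ℝ≥0∞)⁻¹ * (∑ a : ∀ i : Fin N, ZMod (m i), B a) ^ (1 / p) :=
          mul_le_mul_right (VF.sum_rpow_le _ _ hq1) _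
      _ = 2 * (M : ℝ≥0∞) ^ (1 / p - 1) * (∫⁻ x, u x ^ p ∂μ) ^ (1 / p) := by
          rw [hsumB]
          congr 1
          rw [mul_assoc]
          congr 1
          rw [← ENNReal.rpow_neg_one (M : ℝ≥0∞),
            ← ENNReal.rpow_add _ _ hM0 hMtop, ← sub_eq_add_neg]
  -- Step 6 : constant comparison
  have hMle : M ≤ lam * n := by
    have h1 : M = m k * Mgen m k := rfl
    calc M = m k * Mgen m k := h1
      _ ≤ lam * n := Nat.mul_le_mul (hlam k) hk1
  have hconstle : 2 * (M : ℝ≥0∞) ^ (1 / p - 1)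
      ≤ ENNReal.ofReal (2 * ((lam : ℝ) + 2) ^ (1 / p - 1) * (n : ℝ) ^ (1 / p - 1)) := by
    have h1 : (M : ℝ≥0∞) ^ (1 / p - 1) ≤ ((lam * n : ℕ) : ℝ≥0∞) ^ (1 / p - 1) :=
      ENNReal.rpow_le_rpow (by exact_mod_cast hMle) hθ
    have h2 : ((lam * n : ℕ) : ℝ≥0∞) ^ (1 / p - 1)
        = ((lam : ℕ) : ℝ≥0∞) ^ (1 / p - 1) * ((n : ℕ) : ℝ≥0∞) ^ (1 / p - 1) := by
      push_cast
      rw [ENNReal.mul_rpow_of_nonneg _ _ hθ]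
    have h3 : ((lam : ℕ) : ℝ≥0∞) ^ (1 / p - 1) ≤ ENNReal.ofReal (((lam : ℝ) + 2) ^ (1 / p - 1)) := by
      rw [← ENNReal.ofReal_rpow_of_nonneg (by positivity) hθ]
      refine ENNReal.rpow_le_rpow ?_ hθ
      rw [← ENNReal.ofReal_natCast lam]
      exact ENNReal.ofReal_le_ofReal (by linarith)
    have h4 : ((n : ℕ) : ℝ≥0∞) ^ (1 / p - 1) = ENNReal.ofReal ((n : ℝ) ^ (1 / p - 1)) := by
      rw [← ENNReal.ofReal_rpow_of_nonneg (by positivity) hθ, ENNReal.ofReal_natCast]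
    calc 2 * (M : ℝ≥0∞) ^ (1 / p - 1)
        ≤ 2 * (((lam : ℕ) : ℝ≥0∞) ^ (1 / p - 1) * ((n : ℕ) : ℝ≥0∞) ^ (1 / p - 1)) := by
          rw [← h2]; exact mul_le_mul_right h1 _
      _ ≤ 2 * (ENNReal.ofReal (((lam : ℝ) + 2) ^ (1 / p - 1)) * ENNReal.ofReal ((n : ℝ) ^ (1 / p - 1))) := by
          rw [h4]
          exact mul_le_mul_right (mul_le_mul_left h3 _) _
      _ = ENNReal.ofReal (2 * ((lam : ℝ) + 2) ^ (1 / p - 1) * (n : ℝ) ^ (1 / p - 1)) := by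
          rw [ENNReal.ofReal_mul (by positivity), ENNReal.ofReal_mul (by positivity),
            ENNReal.ofReal_ofNat, mul_assoc]
  -- assemble
  have hHpdef : HpNorm m μ p (fun j => Spart m μ f (Mgen m j)) = (∫⁻ x, u x ^ p ∂μ) ^ (1 / p) := rfl
  calc ENNReal.ofReal ‖fcoef m μ f n‖
      ≤ ∫⁻ x, (‖d x‖₊ : ℝ≥0∞) ∂μ := hstep2
    _ ≤ 2 * (M : ℝ≥0∞) ^ (1 / p - 1) * (∫⁻ x, u x ^ p ∂μ) ^ (1 / p) := hstep5
    _ ≤ ENNReal.ofReal (2 * ((lam : ℝ) + 2) ^ (1 / p - 1) * (n : ℝ) ^ (1 / p - 1))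
          * (∫⁻ x, u x ^ p ∂μ) ^ (1 / p) := mul_le_mul_left hconstle _
    _ = ENNReal.ofReal (2 * ((lam : ℝ) + 2) ^ (1 / p - 1) * (n : ℝ) ^ (1 / p - 1))
          * HpNorm m μ p (fun j => Spart m μ f (Mgen m j)) := by rw [hHpdef]

end
end

section
/- Let 0 < p < 1, let N ∈ ℕ, and let a be a p-atom with support contained in I_N (i.e. supp(a) ⊆ I_N, ∫_{I_N} a dμ = 0, ‖a‖_∞ ≤ M_N^{1/p}). Then for every n > M_N, every s < N, and every x ∈ I_s ∖ I_{s+1}, one has |S_n a(x)| / (n+1)^{1/p−1} ≤ λ M_s, where λ = sup_k m_k. -/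
open MeasureTheory Filter ENNReal Finset

noncomputable section

namespace VAux

variable {m : ℕ → ℕ}

lemma Mgen_pos (hm : ∀ k, 2 ≤ m k) (k : ℕ) : 0 < Mgen m k := by
  induction k with
  | zero => simp [Mgen]
  | succ k ih => have := hm k; simp only [Mgen]; positivity

lemma two_pow_le_Mgen (hm : ∀ k, 2 ≤ m k) (k : ℕ) : 2 ^ k ≤ Mgen m k := by
  induction k with
  | zero => simp [Mgen]
  | succ k ih =>
      have := hm k
      calc 2 ^ (k+1) = 2 * 2 ^ k := by ring
        _ ≤ m k * Mgen m k := Nat.mul_le_mul this ih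
        _ = Mgen m (k+1) := rfl

lemma Mgen_dvd {i j : ℕ} (h : i ≤ j) : Mgen m i ∣ Mgen m j := by
  induction j, h using Nat.le_induction with
  | base => exact dvd_rfl
  | succ j _ ih => exact ih.trans (Dvd.intro_left (m j) rfl)

lemma Mgen_le (hm : ∀ k, 2 ≤ m k) {i j : ℕ} (h : i ≤ j) : Mgen m i ≤ Mgen m j :=
  Nat.le_of_dvd (Mgen_pos hm j) (Mgen_dvd h)

lemma digit_eq_zero (hm : ∀ k, 2 ≤ m k) {k j : ℕ} (h : k + 1 ≤ j) : digit m k j = 0 := by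
  have h1 : k < Mgen m j := by
    calc k < 2 ^ k := Nat.lt_two_pow_self
      _ ≤ 2 ^ j := Nat.pow_le_pow_right (by norm_num) (by omega)
      _ ≤ Mgen m j := two_pow_le_Mgen hm j
  simp [digit, Nat.div_eq_of_lt h1]

lemma digit_low (hm : ∀ k, 2 ≤ m k) {j s : ℕ} (hj : j ≤ s) (q r : ℕ) :
    digit m (q * Mgen m (s+1) + r) j = digit m r j := by
  obtain ⟨D, hD⟩ : Mgen m (j+1) ∣ Mgen m (s+1) := Mgen_dvd (by omega)
  have hMj : Mgen m (j+1) = m j * Mgen m j := rfl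
  have h1 : q * Mgen m (s+1) + r = r + (q * D) * m j * Mgen m j := by
    rw [hD, hMj]; ring
  rw [digit, digit, h1, Nat.add_mul_div_right _ _ (Mgen_pos hm j),
    Nat.add_mul_mod_self_right]

lemma digit_hi (hm : ∀ k, 2 ≤ m k) {j s : ℕ} (hj : s + 1 ≤ j) {r : ℕ}
    (hr : r < Mgen m (s+1)) (q : ℕ) :
    digit m (q * Mgen m (s+1) + r) j = digit m (q * Mgen m (s+1)) j := by
  obtain ⟨E, hE⟩ : Mgen m (s+1) ∣ Mgen m j := Mgen_dvd hj
  have hM : 0 < Mgen m (s+1) := Mgen_pos hm (s+1)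
  rw [digit, digit, hE, ← Nat.div_div_eq_div_mul, ← Nat.div_div_eq_div_mul]
  congr 2
  rw [Nat.add_comm, Nat.add_mul_div_right _ _ hM, Nat.div_eq_of_lt hr,
    Nat.mul_div_cancel _ hM, Nat.zero_add]

lemma sum_blocks (f : ℕ → ℂ) (M : ℕ) (Q : ℕ) :
    ∑ k ∈ range (Q * M), f k = ∑ q ∈ range Q, ∑ r ∈ range M, f (q * M + r) := by
  induction Q with
  | zero => simp
  | succ Q ih =>
      rw [Nat.succ_mul, Finset.sum_range_add, ih, Finset.sum_range_succ]

lemma rade_abs (k : ℕ) (x : Gm m) : ‖rade m k x‖ = 1 := by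
  rw [rade, show (2 * Real.pi * Complex.I * ((x k).val : ℂ) / (m k : ℂ))
      = ((2 * Real.pi * ((x k).val) / (m k) : ℝ) : ℂ) * Complex.I by push_cast; ring]
  exact Complex.norm_exp_ofReal_mul_I _

lemma psi_abs (k : ℕ) (x : Gm m) : ‖psi m k x‖ = 1 := by
  rw [psi, norm_prod]
  refine Finset.prod_eq_one fun j _ => ?_
  rw [norm_pow, rade_abs, one_pow]

lemma rade_eq_one {k : ℕ} {x : Gm m} (h : x k = 0) : rade m k x = 1 := by
  rw [rade, h, ZMod.val_zero]
  simp

lemma rade_ne_one (hm : ∀ k, 2 ≤ m k) {k : ℕ} {x : Gm m} (h : x k ≠ 0) :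
    rade m k x ≠ 1 := by
  haveI : NeZero (m k) := ⟨by have := hm k; omega⟩
  intro hone
  rw [rade, Complex.exp_eq_one_iff] at hone
  obtain ⟨z, hz⟩ := hone
  set v := (x k).val with hv
  have hv0 : v ≠ 0 := fun hv' => h ((ZMod.val_eq_zero _).1 hv')
  have hv1 : v < m k := ZMod.val_lt _
  have hmk : ((m k : ℂ)) ≠ 0 := Nat.cast_ne_zero.2 (by have := hm k; omega)
  have hπ : (Real.pi : ℂ) ≠ 0 := by exact_mod_cast Real.pi_ne_zero
  have hI := Complex.I_ne_zero
  have h2 : (v : ℂ) = z * (m k : ℂ) := by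
    field_simp at hz
    have h2πI : (2 * (Real.pi : ℂ) * Complex.I) ≠ 0 := by
      simp [hπ, Complex.I_ne_zero]
    apply mul_left_cancel₀ h2πI
    linear_combination (2 * (Real.pi : ℂ) * Complex.I) * hz
  have h3 : (v : ℤ) = z * (m k : ℤ) := by exact_mod_cast h2
  have h4 : (m k : ℤ) ∣ (v : ℤ) := ⟨z, by linarith⟩
  have h5 : (m k : ℤ) ≤ (v : ℤ) := Int.le_of_dvd (by exact_mod_cast Nat.pos_of_ne_zero hv0) h4
  omega

lemma rade_pow_card (hm : ∀ k, 2 ≤ m k) (k : ℕ) (x : Gm m) :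
    rade m k x ^ (m k) = 1 := by
  have hmk : ((m k : ℂ)) ≠ 0 := Nat.cast_ne_zero.2 (by have := hm k; omega)
  rw [rade, ← Complex.exp_nat_mul, Complex.exp_eq_one_iff]
  exact ⟨(x k).val, by field_simp; push_cast; ring⟩

lemma psi_conj_mul (hm : ∀ k, 2 ≤ m k) {k J : ℕ} (hJ : k + 1 ≤ J) (x t : Gm m) :
    (starRingEnd ℂ) (psi m k t) * psi m k x
      = ∏ j ∈ range J, (rade m j x * (starRingEnd ℂ) (rade m j t)) ^ digit m k j := by
  rw [psi, psi, map_prod, ← Finset.prod_mul_distrib]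
  have h1 : ∀ j ∈ range (k+1),
      (starRingEnd ℂ) (rade m j t ^ digit m k j) * rade m j x ^ digit m k j
        = (rade m j x * (starRingEnd ℂ) (rade m j t)) ^ digit m k j := by
    intro j _
    rw [map_pow, ← mul_pow, mul_comm]
  rw [Finset.prod_congr rfl h1]
  refine Finset.prod_subset (Finset.range_subset_range.2 hJ) ?_
  intro j hj hjk
  have hd : digit m k j = 0 := by
    refine digit_eq_zero hm ?_
    simp only [Finset.mem_range] at hj hjk
    omega
  simp [hd]

lemma measurable_rade (k : ℕ) : Measurable (rade m k) := by
  unfold rade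
  have h1 : Measurable fun x : Gm m => (((x k).val : ℂ)) :=
    (measurable_from_top (f := fun v : ZMod (m k) => ((v.val : ℂ)))).comp
      (measurable_pi_apply k)
  exact Complex.measurable_exp.comp ((measurable_const.mul h1).div_const _)

lemma measurable_psi (k : ℕ) : Measurable (psi m k) :=
  Finset.measurable_prod _ fun j _ => (measurable_rade j).pow_const _

/-- The key kernel bound. -/
lemma kernel_bound (hm : ∀ k, 2 ≤ m k) {s N nn : ℕ} (hsN : s < N) (hsn : s + 1 ≤ nn)
    (x t : Gm m) (hx0 : ∀ j < s, x j = 0) (hxs : x s ≠ 0) (ht : ∀ j < N, t j = 0) :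
    ‖∑ k ∈ range nn, (starRingEnd ℂ) (psi m k t) * psi m k x‖
      ≤ (Mgen m (s+1) : ℝ) := by
  set M := Mgen m (s+1) with hMdef
  have hM : 0 < M := Mgen_pos hm (s+1)
  set w : ℕ → ℂ := fun j => rade m j x * (starRingEnd ℂ) (rade m j t) with hw
  have hw_abs : ∀ j, ‖w j‖ = 1 := by
    intro j
    simp only [hw, norm_mul, Complex.norm_conj, rade_abs, mul_one]
  have hw_low : ∀ j < s, w j = 1 := by
    intro j hj
    simp only [hw, rade_eq_one (hx0 j hj), rade_eq_one (ht j (by omega)), map_one, mul_one]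
  have hw_s : w s = rade m s x := by
    simp only [hw, rade_eq_one (ht s hsN), map_one, mul_one]
  set g : ℕ → ℂ := fun k => ∏ j ∈ range nn, w j ^ digit m k j with hg
  have hsum : (∑ k ∈ range nn, (starRingEnd ℂ) (psi m k t) * psi m k x)
      = ∑ k ∈ range nn, g k := by
    refine Finset.sum_congr rfl fun k hk => ?_
    exact psi_conj_mul hm (Finset.mem_range.1 hk) x t
  have hg_abs : ∀ k, ‖g k‖ ≤ 1 := by
    intro k
    rw [hg, norm_prod]
    calc (∏ j ∈ range nn, ‖w j ^ digit m k j‖)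
        = ∏ j ∈ range nn, 1 := by
          refine Finset.prod_congr rfl fun j _ => ?_
          rw [norm_pow, hw_abs, one_pow]
      _ = 1 := Finset.prod_const_one
      _ ≤ 1 := le_refl 1
  -- geometric sum of w s over a full period is zero
  have hws_ne : w s ≠ 1 := by rw [hw_s]; exact rade_ne_one hm hxs
  have hws_pow : w s ^ (m s) = 1 := by rw [hw_s]; exact rade_pow_card hm s x
  have hgeom : ∑ u ∈ range (m s), w s ^ u = 0 := by
    rw [geom_sum_eq hws_ne, hws_pow]
    simp
  -- blocks of length M sum to zero
  have hblock : ∀ q, ∑ r ∈ range M, g (q * M + r) = 0 := by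
    intro q
    have hsplit : ∀ r ∈ range M, g (q * M + r)
        = (w s ^ digit m r s) * ∏ j ∈ Ico (s+1) nn, w j ^ digit m (q * M) j := by
      intro r hr
      have hrM := Finset.mem_range.1 hr
      have e1 : g (q * M + r)
          = (∏ j ∈ range (s+1), w j ^ digit m (q*M+r) j)
            * ∏ j ∈ Ico (s+1) nn, w j ^ digit m (q*M+r) j := by
        show (∏ j ∈ range nn, w j ^ digit m (q*M+r) j) = _
        rw [Finset.range_eq_Ico,
          ← Finset.prod_Ico_consecutive _ (Nat.zero_le (s+1)) hsn, ← Finset.range_eq_Ico]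
      rw [e1]
      congr 1
      · rw [Finset.prod_range_succ]
        have e2 : ∏ j ∈ range s, w j ^ digit m (q*M+r) j = 1 :=
          Finset.prod_eq_one fun j hj => by
            rw [hw_low j (Finset.mem_range.1 hj), one_pow]
        rw [e2, one_mul, digit_low hm (le_refl s) q r]
      · refine Finset.prod_congr rfl fun j hj => ?_
        rw [digit_hi hm (Finset.mem_Ico.1 hj).1 hrM q]
    rw [Finset.sum_congr rfl hsplit, ← Finset.sum_mul]
    have hinner : ∑ r ∈ range M, w s ^ digit m r s = 0 := by
      have hMs : M = m s * Mgen m s := rfl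
      rw [hMs, sum_blocks]
      have h2 : ∀ u ∈ range (m s), ∑ v ∈ range (Mgen m s), w s ^ digit m (u * Mgen m s + v) s
          = (Mgen m s) • w s ^ u := by
        intro u hu
        have hd : ∀ v ∈ range (Mgen m s), w s ^ digit m (u * Mgen m s + v) s = w s ^ u := by
          intro v hv
          have hv' := Finset.mem_range.1 hv
          have : digit m (u * Mgen m s + v) s = u := by
            rw [digit, Nat.add_comm, Nat.add_mul_div_right _ _ (Mgen_pos hm s),
              Nat.div_eq_of_lt hv', Nat.zero_add, Nat.mod_eq_of_lt (Finset.mem_range.1 hu)]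
          rw [this]
        rw [Finset.sum_congr rfl hd, Finset.sum_const, Finset.card_range]
      rw [Finset.sum_congr rfl h2, ← Finset.smul_sum, hgeom, smul_zero]
    rw [hinner, zero_mul]
  -- decompose range nn into full blocks plus remainder
  have hnn : nn = M * (nn / M) + nn % M := (Nat.div_add_mod nn M).symm
  set Q := nn / M
  set R := nn % M with hR
  have hRM : R < M := Nat.mod_lt _ hM
  rw [hsum]
  rw [show (∑ k ∈ range nn, g k) = ∑ k ∈ range (M * Q + R), g k by rw [← hnn]]
  rw [Finset.sum_range_add, mul_comm M Q, sum_blocks]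
  rw [Finset.sum_congr rfl fun q _ => hblock q, Finset.sum_const_zero, zero_add]
  calc ‖∑ i ∈ range R, g (Q * M + i)‖
      ≤ ∑ i ∈ range R, ‖g (Q * M + i)‖ := norm_sum_le _ _
    _ ≤ ∑ i ∈ range R, 1 := Finset.sum_le_sum fun i _ => hg_abs _
    _ = (R : ℝ) := by simp
    _ ≤ (M : ℝ) := by exact_mod_cast hRM.le

end VAux

/-- If `a` is a `p`-atom supported in `I_N` (`0 < p < 1`), then for every `n > M_N`,
`s < N` and `x ∈ I_s ∖ I_{s+1}`, `|S_n a(x)|/(n+1)^{1/p-1} ≤ λ M_s`. -/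
theorem partial_sum_atom_pointwise_bound
    (m : ℕ → ℕ) (hm : ∀ k, 2 ≤ m k) (lam : ℕ) (hlam : ∀ k, m k ≤ lam)
    (μ : Measure (Gm m)) (hμ : ∀ n x, μ (cyl m n x) = ((Mgen m n : ℝ≥0∞))⁻¹)
    (p : ℝ) (hp0 : 0 < p) (hp1 : p < 1)
    (N : ℕ) (a : Gm m → ℂ) (ha : Measurable a)
    (hsupp : ∀ x ∉ cyl m N 0, a x = 0)
    (hzero : (∫ x in cyl m N 0, a x ∂μ) = 0)
    (hbound : ∀ x, ‖a x‖ ≤ (Mgen m N : ℝ) ^ (1 / p))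
    (n : ℕ) (hn : Mgen m N < n) (s : ℕ) (hs : s < N)
    (x : Gm m) (hx : x ∈ cyl m s 0 \ cyl m (s + 1) 0) :
    ‖Spart m μ a n x‖ / ((n : ℝ) + 1) ^ (1 / p - 1) ≤
      (lam : ℝ) * Mgen m s := by
  classical
  obtain ⟨hx1, hx2⟩ := hx
  have hx0 : ∀ j < s, x j = 0 := fun j hj => hx1 j hj
  have hxs : x s ≠ 0 := by
    intro h0
    refine hx2 (fun j hj => ?_)
    rcases Nat.lt_succ_iff_lt_or_eq.1 hj with h | h
    · exact hx0 j h
    · rw [h]; exact h0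
  haveI : IsFiniteMeasure μ := by
    constructor
    have h0 : cyl m 0 (0 : Gm m) = Set.univ := by ext y; simp [cyl]
    rw [← h0, hμ 0 0]
    simp [Mgen]
  set C1 : ℝ := (Mgen m N : ℝ) ^ (1/p) with hC1
  have hC1nonneg : 0 ≤ C1 := Real.rpow_nonneg (Nat.cast_nonneg _) _
  set K : Gm m → ℂ := fun t => ∑ k ∈ Finset.range n, (starRingEnd ℂ) (psi m k t) * psi m k x
    with hK
  have hKmeas : Measurable K :=
    Finset.measurable_sum _ fun k _ => ((continuous_star.measurable.comp (VAux.measurable_psi k)).mul_const _)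
  have hInt : ∀ k : ℕ, Integrable (fun t => a t * (starRingEnd ℂ) (psi m k t)) μ := by
    intro k
    have hmeas : Measurable fun t => a t * (starRingEnd ℂ) (psi m k t) :=
      ha.mul (continuous_star.measurable.comp (VAux.measurable_psi k))
    refine (integrable_const C1).mono' hmeas.aestronglyMeasurable (ae_of_all _ fun t => ?_)
    have hn1 : ‖a t * (starRingEnd ℂ) (psi m k t)‖ = ‖a t‖ := by
      rw [norm_mul, Complex.norm_conj,
        VAux.psi_abs, mul_one]
    rw [hn1]
    exact hbound t
  have hS : Spart m μ a n x = ∫ t, a t * K t ∂μ := by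
    rw [Spart]
    have e1 : ∀ k ∈ Finset.range n, fcoef m μ a k * psi m k x
        = ∫ t, (a t * (starRingEnd ℂ) (psi m k t)) * psi m k x ∂μ := by
      intro k _
      rw [fcoef, ← integral_mul_const]
    rw [Finset.sum_congr rfl e1, ← integral_finset_sum _ (fun k _ => (hInt k).mul_const _)]
    refine integral_congr_ae (ae_of_all _ fun t => ?_)
    simp only [hK]
    rw [Finset.mul_sum]
    exact Finset.sum_congr rfl fun k _ => by ring
  have hzero' : ∀ t ∉ cyl m N 0, a t * K t = 0 := fun t htc => by
    rw [hsupp t htc, zero_mul]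
  rw [hS, ← MeasureTheory.setIntegral_eq_integral_of_forall_compl_eq_zero hzero']
  have hcylfin : μ (cyl m N 0) < ⊤ := by
    rw [hμ]
    exact ENNReal.inv_lt_top.2 (by exact_mod_cast VAux.Mgen_pos hm N)
  have hsn : s + 1 ≤ n := by
    have h1 : Mgen m (s+1) ≤ Mgen m N := VAux.Mgen_le hm hs
    have h2 := VAux.two_pow_le_Mgen hm (s+1)
    have h3 : s + 1 < 2 ^ (s+1) := Nat.lt_two_pow_self
    omega
  have hKbound : ∀ t ∈ cyl m N 0, ‖a t * K t‖ ≤ C1 * (Mgen m (s+1) : ℝ) := by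
    intro t htc
    have ht0 : ∀ j < N, t j = 0 := fun j hj => htc j hj
    have h1 : ‖K t‖ ≤ (Mgen m (s+1) : ℝ) :=
      VAux.kernel_bound hm hs hsn x t hx0 hxs ht0
    rw [norm_mul]
    exact mul_le_mul (hbound t) h1 (norm_nonneg _) hC1nonneg
  have hnorm := MeasureTheory.norm_setIntegral_le_of_norm_le_const hcylfin hKbound
  have htoReal : μ.real (cyl m N 0) = ((Mgen m N : ℝ))⁻¹ := by
    rw [measureReal_def, hμ, ENNReal.toReal_inv]
    simp
  rw [htoReal] at hnorm
  have hMNpos : (0:ℝ) < (Mgen m N : ℝ) := by exact_mod_cast VAux.Mgen_pos hm N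
  have hexp : (0:ℝ) ≤ 1/p - 1 := by
    have h1 : 1 ≤ 1/p := by rw [le_div_iff₀ hp0]; linarith
    linarith
  have hrw : C1 * (Mgen m (s+1) : ℝ) * ((Mgen m N : ℝ))⁻¹
      = (Mgen m (s+1) : ℝ) * (Mgen m N : ℝ) ^ (1/p - 1) := by
    rw [hC1, Real.rpow_sub hMNpos, Real.rpow_one]
    ring
  have hle2 : (Mgen m N : ℝ) ^ (1/p - 1) ≤ ((n:ℝ) + 1) ^ (1/p - 1) := by
    refine Real.rpow_le_rpow hMNpos.le ?_ hexp
    have : (Mgen m N : ℝ) ≤ (n : ℝ) := by exact_mod_cast hn.le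
    linarith
  have hle3 : (Mgen m (s+1) : ℝ) ≤ (lam : ℝ) * (Mgen m s : ℝ) := by
    have h1 : Mgen m (s+1) = m s * Mgen m s := rfl
    rw [h1]
    push_cast
    exact mul_le_mul_of_nonneg_right (by exact_mod_cast hlam s) (Nat.cast_nonneg _)
  have hrpos : (0:ℝ) < ((n:ℝ) + 1) ^ (1/p - 1) := Real.rpow_pos_of_pos (by positivity) _
  rw [div_le_iff₀ hrpos]
  calc ‖∫ t in cyl m N 0, a t * K t ∂μ‖
      = ‖∫ t in cyl m N 0, a t * K t ∂μ‖ := rfl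
    _ ≤ C1 * (Mgen m (s+1) : ℝ) * ((Mgen m N : ℝ))⁻¹ := hnorm
    _ = (Mgen m (s+1) : ℝ) * (Mgen m N : ℝ) ^ (1/p - 1) := hrw
    _ ≤ (lam : ℝ) * (Mgen m s : ℝ) * (((n:ℝ) + 1) ^ (1/p - 1)) :=
        mul_le_mul hle3 hle2 (Real.rpow_nonneg hMNpos.le _) (by positivity)


end
end
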